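/- Let dμ be a measure on ℝ with compact infinite support and let (a,b) be an open interval disjoint from supp(dμ). Then for each n, the orthonormal polynomial p_n has at most one zero in (a,b); moreover if a = −∞ or b = +∞ (i.e., the interval is unbounded), p_n has no zeros in (a,b). -/

import Mathlib

open MeasureTheory Polynomial

def measSupport (μ : Measure ℝ) : Set ℝ :=
  {x | ∀ ε > 0, 0 < μ (Metric.ball x ε)}

/-- The complement of the measure-theoretic support is null. -/
lemma measSupport_compl_null (μ : Measure ℝ) : μ (measSupport μ)ᶜ = 0 := by
  apply measure_null_of_locally_null
  intro x hx
  simp only [measSupport, Set.mem_compl_iff, Set.mem_setOf_eq, not_forall] at hx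
  push_neg at hx
  obtain ⟨ε, hε, h0⟩ := hx
  exact ⟨Metric.ball x ε, nhdsWithin_le_nhds (Metric.ball_mem_nhds x hε),
    le_antisymm h0 zero_le⟩

/-- Any polynomial is integrable given all moments. -/
lemma integrable_poly_eval (μ : Measure ℝ)
    (hmom : ∀ n : ℕ, Integrable (fun x : ℝ => |x| ^ n) μ) (Q : Polynomial ℝ) :
    Integrable (fun x => Q.eval x) μ := by
  have h : (fun x : ℝ => Q.eval x)
      = fun x => ∑ i ∈ Finset.range (Q.natDegree + 1), Q.coeff i * x ^ i := by
    funext x; exact Q.eval_eq_sum_range x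
  rw [h]
  apply integrable_finset_sum
  intro i _
  refine ((hmom i).const_mul |Q.coeff i|).mono' ?_ ?_
  · exact (continuous_const.mul (continuous_pow i)).aestronglyMeasurable
  · refine Filter.Eventually.of_forall fun x => ?_
    simp [abs_mul, abs_pow, mul_le_mul_left]

/-- Orthogonality to all lower-degree polynomials. -/
lemma ortho_lower (μ : Measure ℝ)
    (hmom : ∀ n : ℕ, Integrable (fun x : ℝ => |x| ^ n) μ)
    (p : ℕ → Polynomial ℝ)
    (hdeg : ∀ k, (p k).natDegree = k)
    (hlead : ∀ k, 0 < (p k).leadingCoeff)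
    (horth : ∀ k m, ∫ x, (p k).eval x * (p m).eval x ∂μ = if k = m then 1 else 0)
    (n : ℕ) :
    ∀ q : Polynomial ℝ, q.natDegree < n → ∫ x, (p n).eval x * q.eval x ∂μ = 0 := by
  suffices H : ∀ k, ∀ q : Polynomial ℝ, q.natDegree ≤ k → k < n →
      ∫ x, (p n).eval x * q.eval x ∂μ = 0 by
    intro q hq; exact H q.natDegree q le_rfl hq
  intro k
  induction k using Nat.strong_induction_on with
  | _ k IH =>
    intro q hqk hkn
    by_cases hq0 : q = 0
    · simp [hq0]
    rcases lt_or_eq_of_le hqk with hlt | heq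
    · exact IH q.natDegree hlt q le_rfl (lt_trans hlt hkn)
    set c := q.leadingCoeff / (p k).leadingCoeff with hc
    set r := q - Polynomial.C c * p k with hr
    have hlk : (p k).leadingCoeff ≠ 0 := (hlead k).ne'
    have hrk : r.coeff k = 0 := by
      have h1 : q.coeff k = q.leadingCoeff := by
        rw [Polynomial.leadingCoeff, heq]
      have h2 : (p k).coeff k = (p k).leadingCoeff := by
        rw [Polynomial.leadingCoeff, hdeg k]
      simp only [hr, Polynomial.coeff_sub, Polynomial.coeff_C_mul, h1, h2, hc]
      field_simp
      ring
    have hrdeg : r.natDegree ≤ k := by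
      refine le_trans (Polynomial.natDegree_sub_le _ _) ?_
      simp only [max_le_iff]
      exact ⟨heq ▸ le_rfl, le_trans (Polynomial.natDegree_C_mul_le _ _) (hdeg k).le⟩
    have hint1 : Integrable (fun x => (p n).eval x * (p k).eval x) μ := by
      have := integrable_poly_eval μ hmom (p n * p k)
      simpa [Polynomial.eval_mul] using this
    have hint2 : Integrable (fun x => (p n).eval x * r.eval x) μ := by
      have := integrable_poly_eval μ hmom (p n * r)
      simpa [Polynomial.eval_mul] using this
    have hqsum : q = Polynomial.C c * p k + r := by rw [hr]; ring
    have hfun : (fun x => (p n).eval x * q.eval x)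
        = fun x => c * ((p n).eval x * (p k).eval x) + (p n).eval x * r.eval x := by
      funext x
      rw [hqsum]
      simp only [Polynomial.eval_add, Polynomial.eval_mul, Polynomial.eval_C]
      ring
    rw [hfun, integral_add (hint1.const_mul c) hint2, integral_const_mul]
    have hnk : n ≠ k := by omega
    have horth0 : ∫ x, (p n).eval x * (p k).eval x ∂μ = 0 := by
      rw [horth n k, if_neg hnk]
    have hrint : ∫ x, (p n).eval x * r.eval x ∂μ = 0 := by
      by_cases hr0 : r = 0
      · simp [hr0]
      · have hrlt : r.natDegree < k := by
          rcases lt_or_eq_of_le hrdeg with h | h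
          · exact h
          · exfalso
            apply Polynomial.leadingCoeff_ne_zero.mpr hr0
            rw [Polynomial.leadingCoeff, h, hrk]
        exact IH r.natDegree hrlt r le_rfl (lt_trans hrlt hkn)
    rw [horth0, hrint]; ring

/-- Key lemma: `p n` cannot pair nonnegatively (and somewhere strictly) against a
lower-degree polynomial on the support. -/
lemma key_pos (μ : Measure ℝ)
    (hmom : ∀ n : ℕ, Integrable (fun x : ℝ => |x| ^ n) μ)
    (p : ℕ → Polynomial ℝ)
    (hdeg : ∀ k, (p k).natDegree = k)
    (hlead : ∀ k, 0 < (p k).leadingCoeff)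
    (horth : ∀ k m, ∫ x, (p k).eval x * (p m).eval x ∂μ = if k = m then 1 else 0)
    (n : ℕ) (q : Polynomial ℝ) (hq : q.natDegree < n)
    (hpos : ∀ x ∈ measSupport μ, 0 ≤ (p n).eval x * q.eval x)
    (x0 : ℝ) (hx0 : x0 ∈ measSupport μ)
    (hne : (p n).eval x0 * q.eval x0 ≠ 0) : False := by
  set f : ℝ → ℝ := fun x => (p n).eval x * q.eval x with hf
  have hfint : Integrable f μ := by
    have := integrable_poly_eval μ hmom (p n * q)
    simpa [hf, Polynomial.eval_mul] using this
  have hint0 : ∫ x, f x ∂μ = 0 := ortho_lower μ hmom p hdeg hlead horth n q hq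
  have hsupp_ae : ∀ᵐ x ∂μ, x ∈ measSupport μ := by
    rw [MeasureTheory.ae_iff]
    have : {x : ℝ | ¬ x ∈ measSupport μ} = (measSupport μ)ᶜ := rfl
    rw [this]
    exact measSupport_compl_null μ
  have hae : 0 ≤ᵐ[μ] f := by
    filter_upwards [hsupp_ae] with x hx using hpos x hx
  have heq0 : f =ᵐ[μ] 0 := (integral_eq_zero_iff_of_nonneg_ae hae hfint).mp hint0
  have hnull : μ {x | f x ≠ 0} = 0 := by
    have := heq0
    rw [Filter.EventuallyEq, MeasureTheory.ae_iff] at this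
    simpa using this
  have hcont : Continuous f := by
    exact ((p n).continuous_aeval).mul (q.continuous_aeval)
  have hopen : IsOpen {x : ℝ | f x ≠ 0} := isOpen_ne_fun hcont continuous_const
  obtain ⟨ε, hε, hball⟩ := Metric.isOpen_iff.mp hopen x0 hne
  have hpos' : 0 < μ (Metric.ball x0 ε) := hx0 ε hε
  have : μ (Metric.ball x0 ε) ≤ 0 := hnull ▸ measure_mono hball
  exact absurd (lt_of_lt_of_le hpos' this) (lt_irrefl 0)

/-- A gap of the support contains at most one zero of each `p_n`; an unbounded
interval disjoint from the support contains no zeros. -/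
theorem stmt_19 (μ : Measure ℝ)
    (hmom : ∀ n : ℕ, Integrable (fun x : ℝ => |x| ^ n) μ)
    (hcpt : IsCompact (measSupport μ))
    (hinf : (measSupport μ).Infinite)
    (p : ℕ → Polynomial ℝ)
    (hdeg : ∀ k, (p k).natDegree = k)
    (hlead : ∀ k, 0 < (p k).leadingCoeff)
    (horth : ∀ k m, ∫ x, (p k).eval x * (p m).eval x ∂μ = if k = m then 1 else 0)
    (n : ℕ) :
    (∀ a b : ℝ, Set.Ioo a b ∩ measSupport μ = ∅ →
      {x ∈ Set.Ioo a b | (p n).eval x = 0}.Subsingleton) ∧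
    (∀ b : ℝ, Set.Iio b ∩ measSupport μ = ∅ →
      ∀ x ∈ Set.Iio b, (p n).eval x ≠ 0) ∧
    (∀ a : ℝ, Set.Ioi a ∩ measSupport μ = ∅ →
      ∀ x ∈ Set.Ioi a, (p n).eval x ≠ 0) := by
  have hpn0 : p n ≠ 0 := fun h =>
    absurd (hlead n) (by simp [h])
  -- a point of the support where p n does not vanish
  obtain ⟨x0, hx0s, hx0z⟩ : ∃ x0, x0 ∈ measSupport μ ∧ (p n).eval x0 ≠ 0 := by
    have hfin : Set.Finite {x : ℝ | (p n).IsRoot x} := Polynomial.finite_setOf_isRoot hpn0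
    obtain ⟨x0, hx0⟩ := (hinf.diff hfin).nonempty
    exact ⟨x0, hx0.1, hx0.2⟩
  refine ⟨?_, ?_, ?_⟩
  · -- at most one zero in a bounded gap
    intro a b hab
    have htwo : ∀ x1 x2 : ℝ, x1 ∈ Set.Ioo a b → x2 ∈ Set.Ioo a b → x1 < x2 →
        (p n).eval x1 = 0 → (p n).eval x2 = 0 → False := by
      intro x1 x2 h1 h2 hlt e1 e2
      obtain ⟨q1, hq1⟩ := (Polynomial.dvd_iff_isRoot.mpr e1 : X - C x1 ∣ p n)
      have e2' : q1.eval x2 = 0 := by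
        have := e2
        rw [hq1] at this
        simp only [Polynomial.eval_mul, Polynomial.eval_sub, Polynomial.eval_X,
          Polynomial.eval_C] at this
        rcases mul_eq_zero.mp this with h | h
        · exact absurd h (by intro h'; exact hlt.ne' (by linarith))
        · exact h
      obtain ⟨q, hq⟩ := (Polynomial.dvd_iff_isRoot.mpr e2' : X - C x2 ∣ q1)
      have hpnq : p n = (X - C x1) * (X - C x2) * q := by rw [hq1, hq]; ring
      have hq0 : q ≠ 0 := by
        intro h; apply hpn0; rw [hpnq, h, mul_zero]
      have hdq : q.natDegree < n := by
        have h1' : (X - C x1 : Polynomial ℝ) ≠ 0 := Polynomial.X_sub_C_ne_zero x1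
        have h2' : (X - C x2 : Polynomial ℝ) ≠ 0 := Polynomial.X_sub_C_ne_zero x2
        have : n = ((X - C x1) * (X - C x2) * q).natDegree := by rw [← hpnq, hdeg]
        rw [Polynomial.natDegree_mul (mul_ne_zero h1' h2') hq0,
          Polynomial.natDegree_mul h1' h2', Polynomial.natDegree_X_sub_C,
          Polynomial.natDegree_X_sub_C] at this
        omega
      refine key_pos μ hmom p hdeg hlead horth n q hdq ?_ x0 hx0s ?_
      · intro x hx
        have hxab : x ∉ Set.Ioo a b := fun hmem =>
          (Set.eq_empty_iff_forall_notMem.mp hab x) ⟨hmem, hx⟩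
        have hxor : x ≤ a ∨ b ≤ x := by
          by_contra h
          push_neg at h
          exact hxab ⟨h.1, h.2⟩
        rw [hpnq]
        simp only [Polynomial.eval_mul, Polynomial.eval_sub, Polynomial.eval_X,
          Polynomial.eval_C]
        rcases hxor with h | h
        · nlinarith [sq_nonneg (q.eval x), h1.1, h2.1, mul_pos
            (by linarith [h1.1] : (0:ℝ) < x1 - x) (by linarith [h2.1] : (0:ℝ) < x2 - x),
            mul_nonneg (le_of_lt (mul_pos (by linarith [h1.1] : (0:ℝ) < x1 - x)
              (by linarith [h2.1] : (0:ℝ) < x2 - x))) (sq_nonneg (q.eval x))]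
        · nlinarith [mul_nonneg (le_of_lt (mul_pos (by linarith [h1.2] : (0:ℝ) < x - x1)
            (by linarith [h2.2] : (0:ℝ) < x - x2))) (sq_nonneg (q.eval x))]
      · have hq0x : q.eval x0 ≠ 0 := by
          intro h; apply hx0z; rw [hpnq]; simp [h]
        exact mul_ne_zero hx0z hq0x
    intro y hy z hz
    by_contra hne
    rcases lt_trichotomy y z with h | h | h
    · exact htwo y z hy.1 hz.1 h hy.2 hz.2
    · exact hne h
    · exact htwo z y hz.1 hy.1 h hz.2 hy.2
  · -- no zeros below the support
    intro b hab x hx hzero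
    obtain ⟨q, hq⟩ := (Polynomial.dvd_iff_isRoot.mpr hzero : X - C x ∣ p n)
    have hq0 : q ≠ 0 := by intro h; apply hpn0; rw [hq, h, mul_zero]
    have hdq : q.natDegree < n := by
      have hx' : (X - C x : Polynomial ℝ) ≠ 0 := Polynomial.X_sub_C_ne_zero x
      have : n = ((X - C x) * q).natDegree := by rw [← hq, hdeg]
      rw [Polynomial.natDegree_mul hx' hq0, Polynomial.natDegree_X_sub_C] at this
      omega
    refine key_pos μ hmom p hdeg hlead horth n q hdq ?_ x0 hx0s ?_
    · intro y hy
      have hyb : b ≤ y := by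
        by_contra h
        push_neg at h
        exact (Set.eq_empty_iff_forall_notMem.mp hab y) ⟨h, hy⟩
      rw [hq]
      simp only [Polynomial.eval_mul, Polynomial.eval_sub, Polynomial.eval_X,
        Polynomial.eval_C]
      nlinarith [mul_nonneg (by have := Set.mem_Iio.mp hx; linarith : (0:ℝ) ≤ y - x)
        (sq_nonneg (q.eval y))]
    · have hq0x : q.eval x0 ≠ 0 := by
        intro h; apply hx0z; rw [hq]; simp [h]
      exact mul_ne_zero hx0z hq0x
  · -- no zeros above the support
    intro a hab x hx hzero
    obtain ⟨q, hq⟩ := (Polynomial.dvd_iff_isRoot.mpr hzero : X - C x ∣ p n)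
    have hq0 : q ≠ 0 := by intro h; apply hpn0; rw [hq, h, mul_zero]
    have hdq : (-q).natDegree < n := by
      have hx' : (X - C x : Polynomial ℝ) ≠ 0 := Polynomial.X_sub_C_ne_zero x
      have : n = ((X - C x) * q).natDegree := by rw [← hq, hdeg]
      rw [Polynomial.natDegree_mul hx' hq0, Polynomial.natDegree_X_sub_C] at this
      rw [Polynomial.natDegree_neg]
      omega
    refine key_pos μ hmom p hdeg hlead horth n (-q) hdq ?_ x0 hx0s ?_
    · intro y hy
      have hya : y ≤ a := by
        by_contra h
        push_neg at h
        exact (Set.eq_empty_iff_forall_notMem.mp hab y) ⟨h, hy⟩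
      rw [hq]
      simp only [Polynomial.eval_mul, Polynomial.eval_neg, Polynomial.eval_sub,
        Polynomial.eval_X, Polynomial.eval_C]
      nlinarith [mul_nonneg (by have := Set.mem_Ioi.mp hx; linarith : (0:ℝ) ≤ x - y)
        (sq_nonneg (q.eval y))]
    · have hq0x : q.eval x0 ≠ 0 := by
        intro h; apply hx0z; rw [hq]; simp [h]
      simp only [Polynomial.eval_neg]
      exact mul_ne_zero hx0z (neg_ne_zero.mpr hq0x)
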